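/- Let P be a poset with least element 0 which is Z-complete, where Z ⊆ P is pseudocomplemented. Then a subset I ⊆ P is Z-complete if and only if for every Z-disjoint S ⊆ P one has: S ⊆ I if and only if the supremum ⋁S (which exists since P is Z-complete) lies in I. -/
import Mathlib


/-- `S` is `Z`-disjoint: there is `f : S → Z` with `p ≤ f p` and `f p ∧ f q = 0`
for distinct `p, q ∈ S`. -/
def ZDisjoint {β : Type*} [PartialOrder β] [OrderBot β] (Z S : Set β) : Prop :=
  ∃ f : β → β, (∀ p ∈ S, f p ∈ Z ∧ p ≤ f p) ∧
    ∀ p ∈ S, ∀ q ∈ S, p ≠ q → Disjoint (f p) (f q)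

/-- `I` is `Z`-complete: every `Z`-disjoint `S ⊆ I` has a supremum lying in `I`, and
whenever `{p, q}` is `Z`-disjoint with supremum in `I`, both `p` and `q` lie in `I`. -/
def ZComplete {β : Type*} [PartialOrder β] [OrderBot β] (Z I : Set β) : Prop :=
  (∀ S ⊆ I, ZDisjoint Z S → ∃ s, IsLUB S s ∧ s ∈ I) ∧
  (∀ p q s, ZDisjoint Z {p, q} → IsLUB {p, q} s → s ∈ I → p ∈ I ∧ q ∈ I)

/-- `Z` is `S`-central: for every `p ∈ S` and `y ∈ Z` there is `z ∈ Z` with `y ∧ z = 0`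
and `p` the supremum of some `q ≤ y` and `r ≤ z`. -/
def SCentral {β : Type*} [PartialOrder β] [OrderBot β] (Z S : Set β) : Prop :=
  ∀ p ∈ S, ∀ y ∈ Z, ∃ z ∈ Z, Disjoint y z ∧ ∃ q r, q ≤ y ∧ r ≤ z ∧ IsLUB {q, r} p
/-- If `P` is `Z`-complete (as a poset) and `Z` is pseudocomplemented (every `z ∈ Z` has
a pseudocomplement in `Z`: a `z⊥ ∈ Z` disjoint from `z` dominating every `y ∈ Z` disjoint
from `z`), then `I` is `Z`-complete iff for every `Z`-disjoint `S ⊆ P`: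
`S ⊆ I` iff `⋁ S ∈ I` (the supremum exists since `P` is `Z`-complete). -/
theorem stmt6 {α : Type*} [PartialOrder α] [OrderBot α] (Z : Set α)
    (hP : ZComplete Z (Set.univ : Set α))
    (hpc : ∀ z ∈ Z, ∃ z' ∈ Z, Disjoint z z' ∧ ∀ y ∈ Z, Disjoint y z → y ≤ z')
    (I : Set α) :
    ZComplete Z I ↔ ∀ S : Set α, ZDisjoint Z S → ∀ s, IsLUB S s → (S ⊆ I ↔ s ∈ I) := by
  constructor
  · rintro ⟨h1, h2⟩ S hSd s hs
    constructor
    · intro hSI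
      obtain ⟨s', hs', hs'I⟩ := h1 S hSI hSd
      rwa [hs.unique hs']
    · intro hsI p hp
      obtain ⟨f, hf1, hf2⟩ := hSd
      -- supremum t of S \ {p}
      obtain ⟨t, ht, -⟩ := hP.1 (S \ {p}) (Set.subset_univ _)
        ⟨f, fun q hq => hf1 q hq.1, fun q hq r hr => hf2 q hq.1 r hr.1⟩
      -- pseudocomplement z' of f p
      obtain ⟨z', hz'Z, hdisj, hz'max⟩ := hpc (f p) (hf1 p hp).1
      have htz' : t ≤ z' := ht.2 (fun q hq => le_trans (hf1 q hq.1).2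
        (hz'max (f q) (hf1 q hq.1).1 (hf2 q hq.1 p hp hq.2)))
      have hlub : IsLUB {p, t} s := by
        constructor
        · rintro x (rfl | rfl)
          · exact hs.1 hp
          · exact ht.2 fun q hq => hs.1 hq.1
        · intro u hu
          apply hs.2
          intro q hq
          by_cases hqp : q = p
          · exact hqp ▸ hu (Set.mem_insert _ _)
          · exact le_trans (ht.1 ⟨hq, hqp⟩) (hu (Set.mem_insert_of_mem _ rfl))
      have hdZ : ZDisjoint Z {p, t} := by
        classical
        refine ⟨fun x => if x = p then f p else z', ?_, ?_⟩
        · rintro x (rfl | rfl)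
          · simp only [if_pos rfl]
            exact hf1 x hp
          · by_cases hxp : x = p
            · simp only [if_pos hxp]
              exact ⟨(hf1 p hp).1, hxp.le.trans (hf1 p hp).2⟩
            · simp only [if_neg hxp]
              exact ⟨hz'Z, htz'⟩
        · intro a ha b hb hne
          by_cases hap : a = p
          · have hbp : b ≠ p := fun h => hne (hap.trans h.symm)
            simp only [if_pos hap, if_neg hbp]
            exact hdisj
          · have hbp : b = p := by
              rcases hb with rfl | rfl
              · rfl
              · rcases ha with rfl | rfl
                · exact absurd rfl hap
                · exact absurd rfl hne
            simp only [if_neg hap, if_pos hbp]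
            exact hdisj.symm
      exact (h2 p t s hdZ hlub hsI).1
  · intro H
    constructor
    · intro S hSI hSd
      obtain ⟨s, hs, -⟩ := hP.1 S (Set.subset_univ _) hSd
      exact ⟨s, hs, (H S hSd s hs).1 hSI⟩
    · intro p q s hd hs hsI
      have := (H {p, q} hd s hs).2 hsI
      exact ⟨this (Set.mem_insert _ _), this (Set.mem_insert_of_mem _ rfl)⟩
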